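/- In the quiver setting with N distinct loops l₁, …, l_N at the vertex v₀, set x_j = L_{l_j} + L_{l_j}* and T = Σ_{j=1}^{N} x_j. Then for every natural number n, ⟨T^n ξ_{v₀}, ξ_{v₀}⟩ = catalan(n/2) · N^{n/2} if n is even, and ⟨T^n ξ_{v₀}, ξ_{v₀}⟩ = 0 if n is odd, where catalan(k) is the k-th Catalan number. -/

import Mathlib

noncomputable section

/-- The type of all finite directed paths of a quiver, including length-zero paths. -/
abbrev QuiverPaths (V : Type) [Quiver.{1} V] : Type 1 := Σ a b : V, Quiver.Path a b

/-- The Hilbert space `ℓ²` indexed by the paths of a quiver. -/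
abbrev QH (V : Type) [Quiver.{1} V] : Type 1 := lp (fun _ : QuiverPaths V => ℂ) 2

/-- The orthonormal basis vector `ξ_q` at the path `q`. -/
noncomputable def xi (V : Type) [Quiver.{1} V] {a b : V} (q : Quiver.Path a b) : QH V :=
  letI : DecidableEq (QuiverPaths V) := Classical.decEq _
  lp.single 2 ⟨a, b, q⟩ 1

def wfn (N : ℕ) : ℕ → ℕ → ℕ
  | 0, 0 => 1
  | 0, _+1 => 0
  | n+1, 0 => N * wfn N n 1
  | n+1, k+1 => wfn N n k + N * wfn N n (k+2)

lemma wfn_zero_of_lt (N : ℕ) : ∀ n k, n < k → wfn N n k = 0 := by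
  intro n
  induction n with
  | zero => intro k hk; match k, hk with | (k+1), _ => rfl
  | succ n ih =>
    intro k hk
    match k, hk with
    | (k+1), hk =>
      show wfn N n k + N * wfn N n (k+2) = 0
      rw [ih k (by omega), ih (k+2) (by omega)]
      simp

lemma pascal_int (n a : ℕ) : (((n+1).choose (a+1) : ℕ) : ℤ) = n.choose a + n.choose (a+1) := by
  exact_mod_cast Nat.choose_succ_succ n a

lemma stepA (N n t : ℕ) :
    (N : ℤ) * ((N : ℤ)^t * ((n.choose t : ℤ) - (n.choose (t+2) : ℤ)))
      = (N : ℤ)^(t+1) * (((n+1).choose (t+1) : ℤ) - ((n+1).choose (t+2) : ℤ)) := by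
  have h1 := pascal_int n t
  have h2 := pascal_int n (t+1)
  rw [show t+1+1 = t+2 by omega] at h2
  linear_combination (N:ℤ)^(t+1) * h2 - (N:ℤ)^(t+1) * h1

lemma stepB (N n e k : ℕ) :
    (N : ℤ)^(e+1) * ((n.choose (e+1) : ℤ) - (n.choose (e+k+2) : ℤ))
      + (N : ℤ) * ((N : ℤ)^e * ((n.choose e : ℤ) - (n.choose (e+k+3) : ℤ)))
      = (N : ℤ)^(e+1) * (((n+1).choose (e+1) : ℤ) - ((n+1).choose (e+k+3) : ℤ)) := by
  have h1 := pascal_int n e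
  have h2 := pascal_int n (e+k+2)
  rw [show e+k+2+1 = e+k+3 by omega] at h2
  linear_combination (N:ℤ)^(e+1) * h2 - (N:ℤ)^(e+1) * h1

lemma wfn_cast (N : ℕ) : ∀ n k, (wfn N n k : ℤ) =
    if k ≤ n ∧ n % 2 = k % 2 then
      (N : ℤ)^((n-k)/2) * ((n.choose ((n-k)/2) : ℤ) - (n.choose ((n-k)/2 + k + 1) : ℤ))
    else 0 := by
  intro n
  induction n with
  | zero =>
    intro k
    match k with
    | 0 => simp [wfn]
    | (k+1) => simp [wfn]
  | succ n ih =>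
    intro k
    match k with
    | 0 =>
      show ((N * wfn N n 1 : ℕ) : ℤ) = _
      rw [Nat.cast_mul, ih 1]
      by_cases hpar : n % 2 = 1
      · rw [if_pos (show 1 ≤ n ∧ n % 2 = 1 % 2 by omega),
          if_pos (show 0 ≤ n + 1 ∧ (n+1) % 2 = 0 % 2 by omega)]
        set t := (n - 1) / 2 with ht
        rw [show (n + 1 - 0)/2 = t + 1 by omega, show t + 1 + 1 = t + 2 by omega,
          show t + 1 + 0 + 1 = t + 2 by omega]
        exact stepA N n t
      · rw [if_neg (show ¬(1 ≤ n ∧ n % 2 = 1 % 2) by omega),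
          if_neg (show ¬(0 ≤ n + 1 ∧ (n+1) % 2 = 0 % 2) by omega)]
        ring
    | (k+1) =>
      show ((wfn N n k + N * wfn N n (k+2) : ℕ) : ℤ) = _
      rw [Nat.cast_add, Nat.cast_mul, ih k, ih (k+2)]
      by_cases h1 : k ≤ n ∧ n % 2 = k % 2
      · rw [if_pos h1, if_pos (show k + 1 ≤ n + 1 ∧ (n+1) % 2 = (k+1) % 2 by omega)]
        by_cases h2 : k + 2 ≤ n
        · rw [if_pos (show k + 2 ≤ n ∧ n % 2 = (k+2) % 2 by omega)]
          obtain ⟨e, he⟩ : ∃ e, (n - k)/2 = e + 1 := ⟨(n-k)/2 - 1, by omega⟩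
          rw [he, show (n - (k+2))/2 = e by omega, show (n + 1 - (k+1))/2 = e + 1 by omega,
            show e + 1 + k + 1 = e + k + 2 by omega,
            show e + (k + 2) + 1 = e + k + 3 by omega,
            show e + 1 + (k + 1) + 1 = e + k + 3 by omega]
          exact stepB N n e k
        · rw [if_neg (show ¬(k + 2 ≤ n ∧ n % 2 = (k+2) % 2) by omega)]
          have hk : k = n := by omega
          subst hk
          rw [show (k - k)/2 = 0 by omega, show (k + 1 - (k+1))/2 = 0 by omega,
            show (0 : ℕ) + k + 1 = k + 1 by omega, show (0 : ℕ) + (k+1) + 1 = k + 2 by omega,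
            Nat.choose_eq_zero_of_lt (show k < k + 1 by omega),
            Nat.choose_eq_zero_of_lt (show k + 1 < k + 2 by omega)]
          simp
      · rw [if_neg h1, if_neg (show ¬(k + 2 ≤ n ∧ n % 2 = (k+2) % 2) by omega),
          if_neg (show ¬(k + 1 ≤ n + 1 ∧ (n+1) % 2 = (k+1) % 2) by omega)]
        ring

lemma catalan_choose (m : ℕ) : catalan m + (2*m).choose (m+1) = (2*m).choose m := by
  apply Nat.eq_of_mul_eq_mul_left (show 0 < m + 1 by omega)
  have h1 : (m + 1) * catalan m = m.centralBinom := succ_mul_catalan_eq_centralBinom m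
  have h2 : (2*m).choose (m+1) * (m+1) = (2*m).choose m * (2*m - m) :=
    Nat.choose_succ_right_eq (2*m) m
  have h3 : 2*m - m = m := by omega
  rw [h3] at h2
  have h4 : m.centralBinom = (2*m).choose m := rfl
  rw [Nat.mul_add, h1, h4]
  nlinarith [h2]

lemma wfn_zero_even (N m : ℕ) : wfn N (2*m) 0 = catalan m * N^m := by
  have h := wfn_cast N (2*m) 0
  rw [if_pos (by omega)] at h
  rw [show (2*m - 0)/2 = m by omega, show m + 0 + 1 = m + 1 by omega] at h
  have hc := catalan_choose m
  have : (wfn N (2*m) 0 : ℤ) = ((catalan m * N^m : ℕ) : ℤ) := by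
    rw [h]
    have : (((2*m).choose m : ℕ) : ℤ) = (catalan m : ℤ) + ((2*m).choose (m+1) : ℤ) := by
      exact_mod_cast congrArg (Nat.cast : ℕ → ℤ) hc.symm
    rw [this]
    push_cast
    ring
  exact_mod_cast this

lemma wfn_zero_odd (N n : ℕ) (h : n % 2 = 1) : wfn N n 0 = 0 := by
  have hh := wfn_cast N n 0
  rw [if_neg (by omega)] at hh
  exact_mod_cast hh


section Analytic

variable {V : Type} [Quiver.{1} V]

open scoped Classical in
lemma inner_xi_xi {a b c d : V} (q : Quiver.Path a b) (r : Quiver.Path c d) :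
    (inner ℂ (xi V q) (xi V r) : ℂ) =
      if (⟨a, b, q⟩ : QuiverPaths V) = ⟨c, d, r⟩ then 1 else 0 := by
  letI : DecidableEq (QuiverPaths V) := Classical.decEq _
  unfold xi
  by_cases h : (⟨a, b, q⟩ : QuiverPaths V) = ⟨c, d, r⟩
  · rw [if_pos h, h, lp.inner_single_left, lp.single_apply_self]
    simp [RCLike.inner_apply]
  · rw [if_neg h, lp.inner_single_left, lp.single_apply_ne _ _ _ h]
    simp [RCLike.inner_apply]

lemma xi_ext {x y : QH V}
    (h : ∀ (a b : V) (r : Quiver.Path a b),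
      (inner ℂ x (xi V r) : ℂ) = inner ℂ y (xi V r)) : x = y := by
  letI : DecidableEq (QuiverPaths V) := Classical.decEq _
  apply lp.ext
  funext σ
  obtain ⟨a, b, r⟩ := σ
  have h2 := h a b r
  show x ⟨a, b, r⟩ = y ⟨a, b, r⟩
  unfold xi at h2
  rw [lp.inner_single_right, lp.inner_single_right] at h2
  rw [RCLike.inner_apply, RCLike.inner_apply, one_mul, one_mul, starRingEnd_apply,
    starRingEnd_apply] at h2
  exact star_injective h2

end Analytic

section Analytic2

variable {V : Type} [Quiver.{1} V] {N : ℕ} {v₀ : V} {l : Fin N → (v₀ ⟶ v₀)}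

lemma cons_sigma_iff (hl : Function.Injective l) {c a : V}
    (q : Quiver.Path c v₀) (r : Quiver.Path a v₀) (i j : Fin N) :
    ((⟨c, v₀, q.cons (l j)⟩ : QuiverPaths V) = ⟨a, v₀, r.cons (l i)⟩) ↔
      (i = j ∧ (⟨c, v₀, q⟩ : QuiverPaths V) = ⟨a, v₀, r⟩) := by
  constructor
  · intro h
    rw [Sigma.mk.inj_iff] at h
    obtain ⟨h1, h2⟩ := h
    subst h1
    have h3 : (⟨v₀, q.cons (l j)⟩ : Σ b, Quiver.Path c b) = ⟨v₀, r.cons (l i)⟩ :=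
      eq_of_heq h2
    rw [Sigma.mk.inj_iff] at h3
    obtain ⟨-, h5⟩ := h3
    have h6 : q.cons (l j) = r.cons (l i) := eq_of_heq h5
    have h7 : q = r := eq_of_heq (Quiver.Path.heq_of_cons_eq_cons h6)
    have h8 : l j = l i := eq_of_heq (Quiver.Path.hom_heq_of_cons_eq_cons h6)
    exact ⟨(hl h8).symm, by rw [h7]⟩
  · rintro ⟨rfl, h⟩
    rw [Sigma.mk.inj_iff] at h
    obtain ⟨h1, h2⟩ := h
    subst h1
    have h3 : (⟨v₀, q⟩ : Σ b, Quiver.Path c b) = ⟨v₀, r⟩ := eq_of_heq h2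
    rw [Sigma.mk.inj_iff] at h3
    rw [eq_of_heq h3.2]

lemma nil_sigma_ne {a : V} (q : Quiver.Path a v₀) (hq : q.length ≠ 0) :
    ((⟨v₀, v₀, Quiver.Path.nil⟩ : QuiverPaths V) ≠ ⟨a, v₀, q⟩) := by
  intro h
  rw [Sigma.mk.inj_iff] at h
  obtain ⟨h1, h2⟩ := h
  subst h1
  have h3 : (⟨v₀, (Quiver.Path.nil : Quiver.Path v₀ v₀)⟩ : Σ b, Quiver.Path v₀ b)
      = ⟨v₀, q⟩ := eq_of_heq h2
  rw [Sigma.mk.inj_iff] at h3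
  have h4 : (Quiver.Path.nil : Quiver.Path v₀ v₀) = q := eq_of_heq h3.2
  rw [← h4] at hq
  simp at hq

variable (Lop : Fin N → (QH V →L[ℂ] QH V))
  (hLop : ∀ (j : Fin N) (c : V) (q : Quiver.Path c v₀),
    Lop j (xi V q) = xi V (q.comp (l j).toPath))
  (hLop' : ∀ (j : Fin N) (c d : V) (q : Quiver.Path c d), d ≠ v₀ → Lop j (xi V q) = 0)

include hLop hLop' in
lemma adjoint_xi (hl : Function.Injective l) (i j : Fin N) {c : V} (q : Quiver.Path c v₀) :
    (ContinuousLinearMap.adjoint (Lop i)) (xi V (q.cons (l j)))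
      = if i = j then xi V q else 0 := by
  apply xi_ext
  intro a b r
  rw [ContinuousLinearMap.adjoint_inner_left]
  by_cases hb : b = v₀
  · subst hb
    rw [hLop i a r]
    have hcomp : r.comp (l i).toPath = r.cons (l i) := rfl
    rw [hcomp, inner_xi_xi]
    by_cases hij : i = j
    · subst hij
      rw [if_pos rfl, inner_xi_xi]
      by_cases hsig : (⟨c, b, q⟩ : QuiverPaths V) = ⟨a, b, r⟩
      · rw [if_pos hsig, if_pos ((cons_sigma_iff hl q r i i).mpr ⟨rfl, hsig⟩)]
      · rw [if_neg hsig, if_neg (fun h => hsig ((cons_sigma_iff hl q r i i).mp h).2)]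
    · rw [if_neg hij, inner_zero_left, if_neg]
      intro h
      exact hij ((cons_sigma_iff hl q r i j).mp h).1
  · rw [hLop' i a b r hb, inner_zero_right]
    by_cases hij : i = j
    · rw [if_pos hij, inner_xi_xi, if_neg]
      intro h
      rw [Sigma.mk.inj_iff] at h
      obtain ⟨h1, h2⟩ := h
      subst h1
      exact hb ((Sigma.mk.inj_iff.mp (eq_of_heq h2)).1).symm
    · rw [if_neg hij, inner_zero_left]

end Analytic2

section Analytic3

variable {V : Type} [Quiver.{1} V] {N : ℕ} {v₀ : V} {l : Fin N → (v₀ ⟶ v₀)}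
variable (Lop : Fin N → (QH V →L[ℂ] QH V))
  (hLop : ∀ (j : Fin N) (c : V) (q : Quiver.Path c v₀),
    Lop j (xi V q) = xi V (q.comp (l j).toPath))
  (hLop' : ∀ (j : Fin N) (c d : V) (q : Quiver.Path c d), d ≠ v₀ → Lop j (xi V q) = 0)

include hLop hLop' in
lemma adjoint_xi_nil (i : Fin N) :
    (ContinuousLinearMap.adjoint (Lop i)) (xi V (Quiver.Path.nil : Quiver.Path v₀ v₀)) = 0 := by
  apply xi_ext
  intro a b r
  rw [ContinuousLinearMap.adjoint_inner_left, inner_zero_left]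
  by_cases hb : b = v₀
  · subst hb
    rw [hLop i a r, show r.comp (l i).toPath = r.cons (l i) from rfl, inner_xi_xi, if_neg]
    exact nil_sigma_ne (r.cons (l i)) (by simp)
  · rw [hLop' i a b r hb, inner_zero_right]

end Analytic3


set_option maxHeartbeats 1000000 in
/-- For `N` pairwise distinct loops `l₁, …, l_N` at a vertex `v₀`, the generating operator
`T = Σ_j (L_{l_j} + L_{l_j}*)` has vacuum moments `⟨T^n ξ_{v₀}, ξ_{v₀}⟩ = catalan(n/2)·N^{n/2}`
for even `n`, and `0` for odd `n`. -/
theorem quiver_generating_operator_moments (V : Type) [Quiver.{1} V]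
    (N : ℕ) (hN : 0 < N) (v₀ : V) (l : Fin N → (v₀ ⟶ v₀)) (hl : Function.Injective l)
    (Lop : Fin N → (QH V →L[ℂ] QH V))
    (hLop : ∀ (j : Fin N) (c : V) (q : Quiver.Path c v₀),
      Lop j (xi V q) = xi V (q.comp (l j).toPath))
    (hLop' : ∀ (j : Fin N) (c d : V) (q : Quiver.Path c d), d ≠ v₀ → Lop j (xi V q) = 0)
    (n : ℕ) :
    (inner ℂ
        (((∑ j : Fin N, (Lop j + ContinuousLinearMap.adjoint (Lop j))) ^ n)
          (xi V (Quiver.Path.nil : Quiver.Path v₀ v₀)))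
        (xi V (Quiver.Path.nil : Quiver.Path v₀ v₀)) : ℂ) =
      if n % 2 = 0 then (catalan (n / 2) : ℂ) * (N : ℂ) ^ (n / 2) else 0 := by
  set ξ : QH V := xi V (Quiver.Path.nil : Quiver.Path v₀ v₀) with hξ
  set P : QH V →L[ℂ] QH V := ∑ j : Fin N, Lop j with hPdef
  set T : QH V →L[ℂ] QH V := ∑ j : Fin N, (Lop j + ContinuousLinearMap.adjoint (Lop j))
    with hTdef
  have hadjP : ContinuousLinearMap.adjoint P
      = ∑ j : Fin N, ContinuousLinearMap.adjoint (Lop j) := by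
    rw [hPdef]
    exact map_sum (ContinuousLinearMap.adjoint :
      (QH V →L[ℂ] QH V) ≃ₗᵢ⋆[ℂ] (QH V →L[ℂ] QH V)) _ _
  have hT : T = P + ContinuousLinearMap.adjoint P := by
    rw [hTdef, Finset.sum_add_distrib, ← hadjP]
  set f : ℕ → QH V := fun k => (P ^ k) ξ with hfdef
  have hf0 : f 0 = ξ := by simp [hfdef]
  have hfs : ∀ k, f (k+1) = P (f k) := by
    intro k
    show (P ^ (k+1)) ξ = P ((P ^ k) ξ)
    rw [pow_succ']
    rfl
  set D : ℕ → Submodule ℂ (QH V) := fun m =>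
    Submodule.span ℂ {x | ∃ (c : V) (q : Quiver.Path c v₀), q.length = m ∧ x = xi V q}
    with hDdef
  have hgen : ∀ (m : ℕ) (c : V) (q : Quiver.Path c v₀), q.length = m → xi V q ∈ D m := by
    intro m c q hq
    simp only [hDdef]
    exact Submodule.subset_span ⟨c, q, hq, rfl⟩
  have hPD : ∀ (m : ℕ), ∀ x ∈ D m, P x ∈ D (m+1) := by
    intro m
    have hle : D m ≤ Submodule.comap (P : QH V →ₗ[ℂ] QH V) (D (m+1)) := by
      simp only [hDdef]
      apply Submodule.span_le.mpr
      rintro x ⟨c, q, hq, rfl⟩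
      simp only [SetLike.mem_coe, Submodule.mem_comap]
      show P (xi V q) ∈ _
      rw [hPdef, ContinuousLinearMap.sum_apply]
      apply Submodule.sum_mem
      intro j _
      rw [hLop j c q]
      apply Submodule.subset_span
      exact ⟨c, q.comp (l j).toPath, by
        simp [Quiver.Path.length_comp, hq, Quiver.Hom.toPath], rfl⟩
    intro x hx
    exact hle hx
  have horth : ∀ (m : ℕ), ∀ x ∈ D (m+1), (inner ℂ ξ x : ℂ) = 0 := by
    intro m
    have hle : D (m+1) ≤ LinearMap.ker ((innerSL ℂ ξ : QH V →L[ℂ] ℂ) : QH V →ₗ[ℂ] ℂ) := by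
      simp only [hDdef]
      apply Submodule.span_le.mpr
      rintro x ⟨c, q, hq, rfl⟩
      simp only [SetLike.mem_coe, LinearMap.mem_ker]
      show (inner ℂ ξ (xi V q) : ℂ) = 0
      rw [hξ, inner_xi_xi, if_neg]
      exact nil_sigma_ne q (by omega)
    intro x hx
    exact hle hx
  have hfD : ∀ k, f k ∈ D k := by
    intro k
    induction k with
    | zero => rw [hf0, hξ]; exact hgen 0 v₀ Quiver.Path.nil rfl
    | succ k ih => rw [hfs k]; exact hPD k (f k) ih
  have hAP : ∀ (m : ℕ), ∀ x ∈ D m, (ContinuousLinearMap.adjoint P) (P x) = (N : ℂ) • x := by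
    intro m
    set A : QH V →L[ℂ] QH V :=
      (ContinuousLinearMap.adjoint P).comp P - (N : ℂ) • ContinuousLinearMap.id ℂ (QH V)
      with hA
    have hle : D m ≤ LinearMap.ker (A : QH V →ₗ[ℂ] QH V) := by
      simp only [hDdef]
      apply Submodule.span_le.mpr
      rintro x ⟨c, q, hq, rfl⟩
      simp only [SetLike.mem_coe, LinearMap.mem_ker]
      show A (xi V q) = 0
      rw [hA]
      simp only [ContinuousLinearMap.sub_apply, ContinuousLinearMap.comp_apply,
        ContinuousLinearMap.smul_apply, ContinuousLinearMap.id_apply, sub_eq_zero]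
      have hstep : ∀ j : Fin N, Lop j (xi V q) = xi V (q.cons (l j)) := fun j => hLop j c q
      rw [hadjP, hPdef]
      simp only [ContinuousLinearMap.sum_apply]
      simp only [hstep]
      simp only [map_sum]
      simp only [adjoint_xi Lop hLop hLop' hl]
      simp only [Finset.sum_ite_eq, Finset.mem_univ, if_true]
      rw [Finset.sum_const, Finset.card_univ, Fintype.card_fin]
      rw [Nat.cast_smul_eq_nsmul]
    intro x hx
    have h2 := hle hx
    rw [LinearMap.mem_ker] at h2
    have h3 : A x = 0 := h2
    rw [hA] at h3
    simp only [ContinuousLinearMap.sub_apply, ContinuousLinearMap.comp_apply,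
      ContinuousLinearMap.smul_apply, ContinuousLinearMap.id_apply, sub_eq_zero] at h3
    exact h3
  have hAPf : ∀ k, (ContinuousLinearMap.adjoint P) (f (k+1)) = (N : ℂ) • f k := by
    intro k
    rw [hfs k]
    exact hAP k (f k) (hfD k)
  have hAPnil : (ContinuousLinearMap.adjoint P) (f 0) = 0 := by
    rw [hf0, hξ, hadjP, ContinuousLinearMap.sum_apply]
    apply Finset.sum_eq_zero
    intro i _
    exact adjoint_xi_nil Lop hLop hLop' i
  have hTf0 : T (f 0) = f 1 := by
    rw [hT, ContinuousLinearMap.add_apply, hAPnil, add_zero]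
    exact (hfs 0).symm
  have hTfs : ∀ k, T (f (k+1)) = f (k+2) + (N : ℂ) • f k := by
    intro k
    rw [hT, ContinuousLinearMap.add_apply, hAPf k, ← hfs (k+1)]
  set g : ℕ → QH V := fun k => Nat.rec 0 (fun m _ => f m) k with hgdef
  have hg0 : g 0 = (0 : QH V) := rfl
  have hgs : ∀ k, g (k+1) = f k := fun k => rfl
  have hTk : ∀ k, T (f k) = f (k+1) + (N : ℂ) • g k := by
    intro k
    cases k with
    | zero => rw [hTf0, hg0, smul_zero, add_zero]
    | succ m => rw [hTfs m, hgs m]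
  have key : ∀ n, (T ^ n) ξ = ∑ k ∈ Finset.range (n+1), ((wfn N n k : ℕ) : ℂ) • f k := by
    intro n
    induction n with
    | zero =>
      rw [pow_zero, Finset.sum_range_one]
      rw [show wfn N 0 0 = 1 from rfl, hf0]
      simp
    | succ n ih =>
      have h1 : (T ^ (n+1)) ξ = T ((T ^ n) ξ) := by
        rw [pow_succ']
        rfl
      rw [h1, ih, map_sum]
      simp only [map_smul, hTk, smul_add]
      rw [Finset.sum_add_distrib]
      rw [Finset.sum_range_succ' (fun k => ((wfn N (n+1) k : ℕ) : ℂ) • f k) (n+1)]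
      have hws : ∀ k, wfn N (n+1) (k+1) = wfn N n k + N * wfn N n (k+2) := fun k => rfl
      have hw0 : wfn N (n+1) 0 = N * wfn N n 1 := rfl
      simp only [hws, hw0, Nat.cast_add, Nat.cast_mul, add_smul]
      rw [Finset.sum_add_distrib, add_assoc]
      congr 1
      rw [Finset.sum_range_succ' (fun k => ((wfn N n k : ℕ) : ℂ) • ((N : ℂ) • g k)) n]
      simp only [hgs, hg0, smul_zero, add_zero]
      rw [← Finset.sum_range_succ' (fun k => ((N : ℂ) * ((wfn N n (k+1) : ℕ) : ℂ)) • f k) (n+1)]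
      rw [Finset.sum_range_succ, Finset.sum_range_succ]
      rw [wfn_zero_of_lt N n (n+1) (by omega), wfn_zero_of_lt N n (n+2) (by omega)]
      simp only [Nat.cast_zero, mul_zero, zero_smul, add_zero]
      apply Finset.sum_congr rfl
      intro k _
      rw [smul_smul, mul_comm]
  rw [key n, sum_inner]
  simp only [inner_smul_left]
  have hterm : ∀ k ∈ Finset.range (n+1), k ≠ 0 →
      (starRingEnd ℂ) ((wfn N n k : ℕ) : ℂ) * (inner ℂ (f k) ξ : ℂ) = 0 := by
    intro k _ hk
    obtain ⟨m, rfl⟩ : ∃ m, k = m + 1 := ⟨k - 1, by omega⟩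
    have h0 : (inner ℂ (f (m+1)) ξ : ℂ) = 0 := by
      rw [← inner_conj_symm, horth m (f (m+1)) (hfD (m+1)), map_zero]
    rw [h0, mul_zero]
  rw [Finset.sum_eq_single_of_mem 0 (Finset.mem_range.mpr (by omega)) hterm]
  rw [hf0, hξ, inner_xi_xi, if_pos rfl, mul_one, map_natCast]
  by_cases hpar : n % 2 = 0
  · rw [if_pos hpar]
    obtain ⟨m, rfl⟩ : ∃ m, n = 2 * m := ⟨n / 2, by omega⟩
    rw [wfn_zero_even N m]
    push_cast
    rw [show 2 * m / 2 = m by omega]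
  · rw [if_neg hpar, wfn_zero_odd N n (by omega)]
    simp
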